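/- Let B ≥ 1, let F_B be the B×B Fourier transform matrix, let L ∈ ℝ^B and k ∈ ℝ, and let U be the 2B×2B unitary matrix [[0, Δ F_B],[Δ, 0]] where Δ = diag(e^{ikL_1}, …, e^{ikL_B}). Then every nonzero eigenvector a ∈ ℂ^{2B} of U satisfies S(a) ≥ (1/2) log B + log 2, and for every σ with 0 < σ < 1 it satisfies R_{σ/(1−σ)}(a) + R_{−σ/(1+σ)}(a) ≥ log B + 2 log 2. -/

import Mathlib

open Matrix

noncomputable section

/-- Shannon entropy of a vector (convention `0 · log 0 = 0`). -/
def shannonEnt {n : Type*} [Fintype n] (x : n → ℂ) : ℝ :=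
  -∑ j, (‖x j‖ ^ 2 / ∑ i, ‖x i‖ ^ 2) * Real.log (‖x j‖ ^ 2 / ∑ i, ‖x i‖ ^ 2)

/-- Rényi entropy of a vector, for a parameter `ρ`. -/
def renyiEnt {n : Type*} [Fintype n] (ρ : ℝ) (x : n → ℂ) : ℝ :=
  -(1 / ρ) * Real.log (∑ j, (‖x j‖ ^ 2 / ∑ i, ‖x i‖ ^ 2) ^ (1 + ρ))

/-- The `B × B` Fourier transform matrix, with `(j,k)` entry
`(1/√B) e^{2πi(j-1)(k-1)/B}` (zero-based indices in `Fin B`). -/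
def fourierMat (B : ℕ) : Matrix (Fin B) (Fin B) ℂ :=
  Matrix.of fun j k =>
    (1 / Real.sqrt B : ℝ) *
      Complex.exp (2 * Real.pi * Complex.I * (j : ℕ) * (k : ℕ) / B)

lemma fourierMat_apply (B : ℕ) (j k : Fin B) :
    fourierMat B j k = ((1 / Real.sqrt B : ℝ) : ℂ) *
      Complex.exp (2 * Real.pi * Complex.I * (j : ℕ) * (k : ℕ) / B) := rfl

lemma norm_fourierMat (B : ℕ) (hB : 1 ≤ B) (j k : Fin B) :
    ‖fourierMat B j k‖ = (Real.sqrt B)⁻¹ := by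
  have hB0 : (0:ℝ) < B := by exact_mod_cast hB
  have harg : (2 * (Real.pi:ℂ) * Complex.I * ((j:ℕ):ℂ) * ((k:ℕ):ℂ) / (B:ℂ))
      = ((2 * Real.pi * (j:ℕ) * (k:ℕ) / (B:ℝ) : ℝ) : ℂ) * Complex.I := by
    push_cast
    ring
  rw [fourierMat_apply, norm_mul, harg]
  rw [Complex.norm_real, Real.norm_eq_abs, Complex.norm_exp_ofReal_mul_I]
  rw [abs_of_nonneg (by positivity), mul_one, one_div]

lemma fourier_orthogonality (B : ℕ) (hB : 1 ≤ B) (k k' : Fin B) :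
    ∑ j : Fin B, fourierMat B j k * (starRingEnd ℂ) (fourierMat B j k')
      = if k = k' then 1 else 0 := by
  have hB0 : (B:ℂ) ≠ 0 := by exact_mod_cast (Nat.pos_of_ne_zero (by omega)).ne'
  have hBr : (0:ℝ) < B := by exact_mod_cast hB
  set c : ℂ := 2 * Real.pi * Complex.I * (((k:ℕ):ℂ) - ((k':ℕ):ℂ)) / B with hc
  have hterm : ∀ j : Fin B, fourierMat B j k * (starRingEnd ℂ) (fourierMat B j k')
      = ((B:ℂ))⁻¹ * Complex.exp c ^ (j:ℕ) := by
    intro j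
    rw [fourierMat_apply, fourierMat_apply, _root_.map_mul, ← Complex.exp_conj]
    have h1 : (starRingEnd ℂ) (((1 / Real.sqrt B : ℝ)) : ℂ) = ((1 / Real.sqrt B : ℝ) : ℂ) :=
      Complex.conj_ofReal _
    have h2 : (starRingEnd ℂ) (2 * (Real.pi:ℂ) * Complex.I * ((j:ℕ):ℂ) * ((k':ℕ):ℂ) / (B:ℂ))
        = -(2 * (Real.pi:ℂ) * Complex.I * ((j:ℕ):ℂ) * ((k':ℕ):ℂ) / (B:ℂ)) := by
      simp [_root_.map_mul, map_div₀, Complex.conj_ofReal, Complex.conj_I, map_ofNat]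
      push_cast
      ring
    have h3 : ((j:ℕ):ℂ) * c = 2 * (Real.pi:ℂ) * Complex.I * ((j:ℕ):ℂ) * ((k:ℕ):ℂ) / (B:ℂ)
        + -(2 * (Real.pi:ℂ) * Complex.I * ((j:ℕ):ℂ) * ((k':ℕ):ℂ) / (B:ℂ)) := by
      rw [hc]; field_simp; ring
    have h4 : ((1 / Real.sqrt B : ℝ) : ℂ) * ((1 / Real.sqrt B : ℝ) : ℂ) = ((B:ℂ))⁻¹ := by
      rw [← Complex.ofReal_mul]
      rw [div_mul_div_comm, one_mul, Real.mul_self_sqrt hBr.le]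
      push_cast
      rw [one_div]
    have h5 : Complex.exp c ^ (j:ℕ) = Complex.exp (2 * (Real.pi:ℂ) * Complex.I * ((j:ℕ):ℂ) * ((k:ℕ):ℂ) / (B:ℂ)) *
        Complex.exp (-(2 * (Real.pi:ℂ) * Complex.I * ((j:ℕ):ℂ) * ((k':ℕ):ℂ) / (B:ℂ))) := by
      rw [← Complex.exp_add, ← h3, Complex.exp_nat_mul]
    rw [h1, h2, h5, ← h4]
    ring
  rw [Finset.sum_congr rfl (fun j _ => hterm j), ← Finset.mul_sum]
  by_cases hkk : k = k'
  · subst hkk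
    have : c = 0 := by rw [hc]; simp
    simp [this, if_pos rfl]
    field_simp
  · rw [if_neg hkk]
    have hsum : ∑ j : Fin B, Complex.exp c ^ (j:ℕ) = ∑ i ∈ Finset.range B, Complex.exp c ^ i :=
      Fin.sum_univ_eq_sum_range _ B
    have hne1 : Complex.exp c ≠ 1 := by
      intro h
      obtain ⟨n, hn⟩ := Complex.exp_eq_one_iff.mp h
      rw [hc] at hn
      have h2pi : (2 * (Real.pi:ℂ) * Complex.I) ≠ 0 := by
        simp [Complex.ext_iff, Real.pi_ne_zero, Complex.I_ne_zero]
      have : (((k:ℕ):ℂ) - ((k':ℕ):ℂ)) = (n:ℂ) * B := by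
        have h2 : 2 * (Real.pi:ℂ) * Complex.I * (((k:ℕ):ℂ) - ((k':ℕ):ℂ))
            = 2 * (Real.pi:ℂ) * Complex.I * ((n:ℂ) * B) := by
          field_simp at hn
          linear_combination (2 * (Real.pi:ℂ) * Complex.I) * hn
        exact mul_left_cancel₀ h2pi h2
      have hZ : ((k:ℕ):ℤ) - ((k':ℕ):ℤ) = n * B := by exact_mod_cast this
      have hk := k.isLt; have hk' := k'.isLt
      have hne : ((k:ℕ):ℤ) ≠ ((k':ℕ):ℤ) := by
        simpa [Fin.ext_iff] using fun h => hkk (by exact_mod_cast Fin.ext (by exact_mod_cast h))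
      rcases Int.lt_or_lt_of_ne hne with h | h <;> 
      · rcases Int.lt_or_lt_of_ne (show n ≠ 0 by rintro rfl; omega) with hn0 | hn0 <;> nlinarith [hk, hk', hn0]
    have hB1 : Complex.exp c ^ B = 1 := by
      rw [← Complex.exp_nat_mul, hc]
      have : (B:ℂ) * (2 * (Real.pi:ℂ) * Complex.I * (((k:ℕ):ℂ) - ((k':ℕ):ℂ)) / B)
          = ((((k:ℕ):ℤ) - ((k':ℕ):ℤ) : ℤ):ℂ) * (2 * Real.pi * Complex.I) := by
        field_simp
        push_cast
        ring
      rw [this, Complex.exp_int_mul_two_pi_mul_I]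
    rw [hsum, geom_sum_eq hne1, hB1]
    simp

lemma mulVec_apply' {B : ℕ} (M : Matrix (Fin B) (Fin B) ℂ) (u : Fin B → ℂ) (j : Fin B) :
    M.mulVec u j = ∑ k, M j k * u k := rfl

lemma fourier_parseval (B : ℕ) (hB : 1 ≤ B) (u : Fin B → ℂ) :
    ∑ j, ‖(fourierMat B).mulVec u j‖ ^ 2 = ∑ k, ‖u k‖ ^ 2 := by
  set mv := (fourierMat B).mulVec u with hmv
  have key : ∑ j, mv j * (starRingEnd ℂ) (mv j) = ∑ k, u k * (starRingEnd ℂ) (u k) := by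
    have expand : ∀ j, mv j * (starRingEnd ℂ) (mv j)
        = ∑ k, ∑ k', (u k * (starRingEnd ℂ) (u k')) *
            (fourierMat B j k * (starRingEnd ℂ) (fourierMat B j k')) := by
      intro j
      rw [hmv, mulVec_apply', map_sum, Finset.sum_mul_sum]
      refine Finset.sum_congr rfl fun k _ => Finset.sum_congr rfl fun k' _ => ?_
      rw [_root_.map_mul]
      ring
    calc ∑ j, mv j * (starRingEnd ℂ) (mv j)
        = ∑ j, ∑ k, ∑ k', (u k * (starRingEnd ℂ) (u k')) *
            (fourierMat B j k * (starRingEnd ℂ) (fourierMat B j k')) :=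
          Finset.sum_congr rfl fun j _ => expand j
      _ = ∑ k, ∑ k', (u k * (starRingEnd ℂ) (u k')) *
            ∑ j, fourierMat B j k * (starRingEnd ℂ) (fourierMat B j k') := by
          rw [Finset.sum_comm]
          refine Finset.sum_congr rfl fun k _ => ?_
          rw [Finset.sum_comm]
          refine Finset.sum_congr rfl fun k' _ => ?_
          rw [Finset.mul_sum]
      _ = ∑ k, ∑ k', (u k * (starRingEnd ℂ) (u k')) * (if k = k' then 1 else 0) := by
          refine Finset.sum_congr rfl fun k _ => Finset.sum_congr rfl fun k' _ => ?_
          rw [fourier_orthogonality B hB k k']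
      _ = ∑ k, u k * (starRingEnd ℂ) (u k) := by
          refine Finset.sum_congr rfl fun k _ => ?_
          simp
  have cast1 : ∀ (z : ℂ), z * (starRingEnd ℂ) z = ((‖z‖ ^ 2 : ℝ) : ℂ) := by
    intro z
    rw [Complex.mul_conj]
    norm_cast
    rw [← Complex.sq_norm]
  have : ((∑ j, ‖mv j‖ ^ 2 : ℝ) : ℂ) = ((∑ k, ‖u k‖ ^ 2 : ℝ) : ℂ) := by
    push_cast
    calc (∑ j, (‖mv j‖:ℂ) ^ 2) = ∑ j, mv j * (starRingEnd ℂ) (mv j) := by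
          refine Finset.sum_congr rfl fun j _ => ?_
          rw [cast1]; push_cast; ring
      _ = ∑ k, u k * (starRingEnd ℂ) (u k) := key
      _ = ∑ k, (‖u k‖:ℂ) ^ 2 := by
          refine Finset.sum_congr rfl fun k _ => ?_
          rw [cast1]; push_cast; ring
  exact_mod_cast this

section BIL

open Complex HadamardThreeLines in
lemma fourier_bilinear_bound (B : ℕ) (hB : 1 ≤ B) (σ : ℝ) (hσ0 : 0 < σ) (hσ1 : σ < 1)
    (y w : Fin B → ℂ) :
    ‖∑ j, w j * (fourierMat B).mulVec y j‖ ≤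
      (B:ℝ) ^ (-σ/2 : ℝ) *
        ((∑ k, ‖y k‖ ^ (2/(1+σ) : ℝ)) * (∑ j, ‖w j‖ ^ (2/(1+σ) : ℝ))) ^ ((1+σ)/2 : ℝ) := by
  have hσ1' : (0:ℝ) < 1 + σ := by linarith
  set p : ℝ := 2/(1+σ) with hpdef
  have hp0 : 0 < p := by positivity
  have hp2 : p ≤ 2 := by
    rw [hpdef, div_le_iff₀ hσ1']
    linarith
  have hBpos : (0:ℝ) < B := by exact_mod_cast hB
  by_cases hy : y = 0
  · subst hy
    simp only [Matrix.mulVec_zero, Pi.zero_apply, mul_zero, Finset.sum_const_zero, norm_zero]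
    positivity
  by_cases hw : w = 0
  · subst hw
    simp only [Pi.zero_apply, zero_mul, Finset.sum_const_zero, norm_zero]
    positivity
  set Py : ℝ := ∑ k, ‖y k‖ ^ (p : ℝ) with hPy
  set Pw : ℝ := ∑ j, ‖w j‖ ^ (p : ℝ) with hPw
  have sum_rpow_pos : ∀ v : Fin B → ℂ, v ≠ 0 → 0 < ∑ k, ‖v k‖ ^ (p:ℝ) := by
    intro v hv
    have : ∃ k, v k ≠ 0 := by
      by_contra h
      push_neg at h
      exact hv (funext h)
    obtain ⟨k0, hk0⟩ := this
    refine Finset.sum_pos' (fun k _ => by positivity) ⟨k0, Finset.mem_univ _, ?_⟩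
    exact Real.rpow_pos_of_pos (norm_pos_iff.mpr hk0) _
  have hPy0 : 0 < Py := sum_rpow_pos y hy
  have hPw0 : 0 < Pw := sum_rpow_pos w hw
  -- the analytic family
  set Vf : (Fin B → ℂ) → Fin B → ℂ → ℂ := fun v k s =>
    if v k = 0 then 0 else (v k / (‖v k‖ : ℂ)) *
      Complex.exp (((p:ℂ) * (1+s)/2) * ((Real.log ‖v k‖ : ℝ) : ℂ)) with hVf
  set G : ℂ → ℂ := fun s => ∑ j, ∑ k, Vf w j s * (fourierMat B j k * Vf y k s) with hG
  -- norms of Vf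
  have normVf : ∀ (v : Fin B → ℂ) (k : Fin B) (s : ℂ), 0 ≤ s.re →
      ‖Vf v k s‖ = ‖v k‖ ^ (p*(1+s.re)/2 : ℝ) := by
    intro v k s hs
    by_cases h : v k = 0
    · have h0 : Vf v k s = 0 := by simp [hVf, h]
      rw [h0, h, norm_zero]
      exact (Real.zero_rpow (by positivity)).symm
    · have hn : (0:ℝ) < ‖v k‖ := norm_pos_iff.mpr h
      rw [hVf]
      simp only [if_neg h]
      rw [norm_mul]
      have h1 : ‖v k / (‖v k‖ : ℂ)‖ = 1 := by
        rw [norm_div, Complex.norm_real, norm_norm, div_self hn.ne']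
      have harg : (((p:ℂ) * (1+s)/2) * ((Real.log ‖v k‖ : ℝ) : ℂ))
          = ((p * Real.log ‖v k‖ / 2 : ℝ) : ℂ) * (1 + s) := by
        push_cast
        ring
      have h2 : ‖Complex.exp (((p:ℂ) * (1+s)/2) * ((Real.log ‖v k‖ : ℝ) : ℂ))‖
          = Real.exp ((p * Real.log ‖v k‖ / 2) * (1 + s.re)) := by
        rw [harg, Complex.norm_exp]
        congr 1
        rw [Complex.re_ofReal_mul]
        simp
      rw [h1, one_mul, h2, Real.rpow_def_of_pos hn]
      congr 1
      ring
  -- value at real σ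
  have valVf : ∀ (v : Fin B → ℂ) (k : Fin B), Vf v k (σ:ℂ) = v k := by
    intro v k
    by_cases h : v k = 0
    · rw [hVf]; simp [h]
    · have hn : (0:ℝ) < ‖v k‖ := norm_pos_iff.mpr h
      rw [hVf]
      simp only [if_neg h]
      have he : ((p:ℂ) * (1+(σ:ℂ))/2) = 1 := by
        have : p * (1+σ)/2 = 1 := by
          rw [hpdef]; field_simp
        calc ((p:ℂ) * (1+(σ:ℂ))/2) = ((p * (1+σ)/2 : ℝ) : ℂ) := by push_cast; ring
          _ = 1 := by rw [this]; norm_num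
      rw [he, one_mul, ← Complex.ofReal_exp, Real.exp_log hn]
      rw [div_mul_cancel₀]
      exact_mod_cast hn.ne'
  -- differentiability
  have dVf : ∀ (v : Fin B → ℂ) (k : Fin B), Differentiable ℂ (fun s => Vf v k s) := by
    intro v k
    by_cases h : v k = 0
    · simp only [hVf, if_pos h]
      exact differentiable_const 0
    · simp only [hVf, if_neg h]
      apply Differentiable.const_mul
      apply Differentiable.cexp
      fun_prop
  have hGdiff : Differentiable ℂ G := by
    rw [hG]
    apply Differentiable.fun_sum
    intro j _
    apply Differentiable.fun_sum
    intro k _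
    exact (dVf w j).mul ((dVf y k).const_mul _)
  -- boundary bound at re = 0
  have bdry0 : ∀ z : ℂ, z.re = 0 → ‖G z‖ ≤ Real.sqrt Pw * Real.sqrt Py := by
    intro z hz
    have hre : (0:ℝ) ≤ z.re := le_of_eq hz.symm
    have hVfn : ∀ (v : Fin B → ℂ) (k : Fin B), ‖Vf v k z‖ = ‖v k‖ ^ (p/2 : ℝ) := by
      intro v k
      rw [normVf v k z hre, hz]
      norm_num
    set mv := (fourierMat B).mulVec (fun k => Vf y k z) with hmvdef
    have hGform : G z = ∑ j, Vf w j z * mv j := by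
      rw [hG, hmvdef]
      refine Finset.sum_congr rfl fun j _ => ?_
      rw [mulVec_apply', Finset.mul_sum]
    have step1 : ‖G z‖ ≤ ∑ j, ‖Vf w j z‖ * ‖mv j‖ := by
      rw [hGform]
      refine (norm_sum_le _ _).trans (le_of_eq ?_)
      exact Finset.sum_congr rfl fun j _ => norm_mul _ _
    have cs : (∑ j, ‖Vf w j z‖ * ‖mv j‖) ^ 2
        ≤ (∑ j, ‖Vf w j z‖ ^ 2) * (∑ j, ‖mv j‖ ^ 2) :=
      Finset.sum_mul_sq_le_sq_mul_sq _ _ _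
    have sq1 : (∑ j, ‖Vf w j z‖ ^ 2) = Pw := by
      rw [hPw]
      refine Finset.sum_congr rfl fun j _ => ?_
      rw [hVfn w j, ← Real.rpow_natCast (‖w j‖ ^ (p/2 : ℝ)) 2, ← Real.rpow_mul (norm_nonneg _)]
      norm_num
    have sq2 : (∑ j, ‖mv j‖ ^ 2) = Py := by
      rw [hmvdef, fourier_parseval B hB, hPy]
      refine Finset.sum_congr rfl fun k _ => ?_
      rw [hVfn y k, ← Real.rpow_natCast (‖y k‖ ^ (p/2 : ℝ)) 2, ← Real.rpow_mul (norm_nonneg _)]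
      norm_num
    have hnn : (0:ℝ) ≤ ∑ j, ‖Vf w j z‖ * ‖mv j‖ :=
      Finset.sum_nonneg fun j _ => mul_nonneg (norm_nonneg _) (norm_nonneg _)
    have : (∑ j, ‖Vf w j z‖ * ‖mv j‖) ≤ Real.sqrt Pw * Real.sqrt Py := by
      rw [← Real.sqrt_mul_self hnn]
      rw [← Real.sqrt_mul hPw0.le]
      apply Real.sqrt_le_sqrt
      rw [← sq1, ← sq2] at *
      calc (∑ j, ‖Vf w j z‖ * ‖mv j‖) * (∑ j, ‖Vf w j z‖ * ‖mv j‖)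
          = (∑ j, ‖Vf w j z‖ * ‖mv j‖) ^ 2 := by ring
        _ ≤ _ := cs
    exact step1.trans this
  -- boundary bound at re = 1
  have bdry1 : ∀ z : ℂ, z.re = 1 → ‖G z‖ ≤ (Real.sqrt B)⁻¹ * (Pw * Py) := by
    intro z hz
    have hre : (0:ℝ) ≤ z.re := by rw [hz]; norm_num
    have hVfn : ∀ (v : Fin B → ℂ) (k : Fin B), ‖Vf v k z‖ = ‖v k‖ ^ (p : ℝ) := by
      intro v k
      rw [normVf v k z hre, hz]
      norm_num
    have step1 : ‖G z‖ ≤ ∑ j, ∑ k, ‖w j‖ ^ (p:ℝ) * ((Real.sqrt B)⁻¹ * ‖y k‖ ^ (p:ℝ)) := by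
      rw [hG]
      refine (norm_sum_le _ _).trans ?_
      refine Finset.sum_le_sum fun j _ => ?_
      refine (norm_sum_le _ _).trans ?_
      refine Finset.sum_le_sum fun k _ => le_of_eq ?_
      rw [norm_mul, norm_mul, hVfn w j, hVfn y k, norm_fourierMat B hB]
    refine step1.trans (le_of_eq ?_)
    calc ∑ j, ∑ k, ‖w j‖ ^ (p:ℝ) * ((Real.sqrt B)⁻¹ * ‖y k‖ ^ (p:ℝ))
        = ∑ j, ‖w j‖ ^ (p:ℝ) * ((Real.sqrt B)⁻¹ * Py) := by
          refine Finset.sum_congr rfl fun j _ => ?_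
          simp only [hPy, Finset.mul_sum]
      _ = Pw * ((Real.sqrt B)⁻¹ * Py) := by rw [hPw, Finset.sum_mul]
      _ = (Real.sqrt B)⁻¹ * (Pw * Py) := by ring
  -- boundedness on the strip
  have hbdd : BddAbove ((norm ∘ G) '' (verticalClosedStrip 0 1)) := by
    refine ⟨∑ j : Fin B, ∑ k : Fin B,
      (max 1 (‖w j‖ ^ 2)) * ((Real.sqrt B)⁻¹ * max 1 (‖y k‖ ^ 2)), ?_⟩
    rintro x ⟨z, hz, rfl⟩
    simp only [Function.comp_apply]
    have hz0 : (0:ℝ) ≤ z.re := hz.1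
    have hz1 : z.re ≤ 1 := hz.2
    have hVfb : ∀ (v : Fin B → ℂ) (k : Fin B), ‖Vf v k z‖ ≤ max 1 (‖v k‖ ^ 2) := by
      intro v k
      rw [normVf v k z hz0]
      set e : ℝ := p*(1+z.re)/2 with hedef
      have he0 : 0 < e := by positivity
      have he2 : e ≤ 2 := by
        rw [hedef]
        nlinarith
      by_cases hv : v k = 0
      · rw [hv]
        simp only [norm_zero]
        rw [Real.zero_rpow he0.ne']
        exact le_max_of_le_left zero_le_one
      · have hn : (0:ℝ) < ‖v k‖ := norm_pos_iff.mpr hv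
        rcases le_or_gt ‖v k‖ 1 with h1 | h1
        · refine le_max_of_le_left ?_
          calc ‖v k‖ ^ (e:ℝ) ≤ ‖v k‖ ^ (0:ℝ) :=
                Real.rpow_le_rpow_of_exponent_ge hn h1 he0.le
            _ = 1 := Real.rpow_zero _
        · refine le_max_of_le_right ?_
          calc ‖v k‖ ^ (e:ℝ) ≤ ‖v k‖ ^ (2:ℝ) :=
                Real.rpow_le_rpow_of_exponent_le h1.le he2
            _ = ‖v k‖ ^ 2 := by
                rw [← Real.rpow_natCast (‖v k‖) 2]
                norm_num
    calc ‖G z‖ ≤ ∑ j, ∑ k, ‖Vf w j z‖ * (‖fourierMat B j k‖ * ‖Vf y k z‖) := by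
          rw [hG]
          refine (norm_sum_le _ _).trans ?_
          refine Finset.sum_le_sum fun j _ => ?_
          refine (norm_sum_le _ _).trans ?_
          refine Finset.sum_le_sum fun k _ => le_of_eq ?_
          rw [norm_mul, norm_mul]
      _ ≤ ∑ j, ∑ k, (max 1 (‖w j‖ ^ 2)) * ((Real.sqrt B)⁻¹ * max 1 (‖y k‖ ^ 2)) := by
          refine Finset.sum_le_sum fun j _ => Finset.sum_le_sum fun k _ => ?_
          rw [norm_fourierMat B hB]
          have h1 := hVfb w j
          have h2 := hVfb y k
          have hs : (0:ℝ) ≤ (Real.sqrt B)⁻¹ := by positivity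
          have m1 : (0:ℝ) ≤ max 1 (‖w j‖ ^ 2) := le_max_of_le_left zero_le_one
          exact mul_le_mul h1 (mul_le_mul_of_nonneg_left h2 hs) (by positivity) m1
  -- apply Hadamard three lines
  have hmem : (σ:ℂ) ∈ verticalClosedStrip 0 1 := by
    simp only [verticalClosedStrip, Set.mem_preimage, Complex.ofReal_re, Set.mem_Icc]
    exact ⟨hσ0.le, hσ1.le⟩
  have h3l := norm_le_interp_of_mem_verticalClosedStrip₀₁' G hmem
    (hGdiff.diffContOnCl) hbdd
    (fun z hz => bdry0 z hz)
    (fun z hz => bdry1 z hz)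
  rw [Complex.ofReal_re] at h3l
  -- identify G σ
  have hGσ : G (σ:ℂ) = ∑ j, w j * (fourierMat B).mulVec y j := by
    rw [hG]
    refine Finset.sum_congr rfl fun j _ => ?_
    rw [mulVec_apply', Finset.mul_sum]
    refine Finset.sum_congr rfl fun k _ => ?_
    rw [valVf w j, valVf y k]
  rw [hGσ] at h3l
  refine h3l.trans (le_of_eq ?_)
  -- algebra with rpow
  have e1 : Real.sqrt Pw * Real.sqrt Py = (Py * Pw) ^ ((1:ℝ)/2) := by
    rw [← Real.sqrt_mul hPw0.le, Real.sqrt_eq_rpow, mul_comm]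
  have e2 : (Real.sqrt B)⁻¹ * (Pw * Py) = (B:ℝ) ^ (-(1:ℝ)/2) * (Py * Pw) := by
    rw [Real.sqrt_eq_rpow, ← Real.rpow_neg hBpos.le, mul_comm Pw Py]
    norm_num
  rw [e1, e2]
  have hPP : (0:ℝ) < Py * Pw := mul_pos hPy0 hPw0
  rw [← Real.rpow_mul hPP.le]
  rw [Real.mul_rpow (by positivity) hPP.le]
  rw [← Real.rpow_mul hBpos.le]
  rw [← mul_assoc, mul_comm ((Py * Pw) ^ ((1:ℝ)/2*(1-σ))) ((B:ℝ) ^ (-(1:ℝ)/2*σ)),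
    mul_assoc, ← Real.rpow_add hPP]
  congr 1
  · congr 1
    ring
  · congr 1
    ring

end BIL

lemma sum_norm_rpow_pos {B : ℕ} (y : Fin B → ℂ) (hy : y ≠ 0) (c : ℝ) :
    0 < ∑ k, ‖y k‖ ^ (c : ℝ) := by
  have : ∃ k, y k ≠ 0 := by
    by_contra h
    push_neg at h
    exact hy (funext h)
  obtain ⟨k0, hk0⟩ := this
  refine Finset.sum_pos' (fun k _ => by positivity) ⟨k0, Finset.mem_univ _, ?_⟩
  exact Real.rpow_pos_of_pos (norm_pos_iff.mpr hk0) _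

set_option maxHeartbeats 2000000 in
lemma core_ineq (B : ℕ) (hB : 1 ≤ B) (y : Fin B → ℂ) (hy : y ≠ 0)
    (hFy : ∀ j, ‖(fourierMat B).mulVec y j‖ = ‖y j‖)
    (σ : ℝ) (hσ0 : 0 < σ) (hσ1 : σ < 1) :
    σ * Real.log B ≤ (1+σ) * Real.log (∑ k, ‖y k‖ ^ (2/(1+σ) : ℝ))
      - (1-σ) * Real.log (∑ k, ‖y k‖ ^ (2/(1-σ) : ℝ)) := by
  have hσ1' : (0:ℝ) < 1 + σ := by linarith
  have hσ1'' : (0:ℝ) < 1 - σ := by linarith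
  have hBpos : (0:ℝ) < B := by exact_mod_cast hB
  set p : ℝ := 2/(1+σ) with hpdef
  set q : ℝ := 2/(1-σ) with hqdef
  have hq2 : (2:ℝ) < q := by
    rw [hqdef, lt_div_iff₀ hσ1'']
    nlinarith
  set z := (fourierMat B).mulVec y with hz
  have hFy' : ∀ j, ‖z j‖ = ‖y j‖ := hFy
  set w : Fin B → ℂ := fun j => (starRingEnd ℂ) (z j) * ((‖z j‖ ^ (q - 2 : ℝ) : ℝ) : ℂ) with hw
  set A : ℝ := ∑ k, ‖y k‖ ^ (q : ℝ) with hA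
  set P : ℝ := ∑ k, ‖y k‖ ^ (p : ℝ) with hP
  have hA0 : 0 < A := sum_norm_rpow_pos y hy q
  have hP0 : 0 < P := sum_norm_rpow_pos y hy p
  -- the pairing equals A
  have pair : ∑ j, w j * z j = ((A : ℝ) : ℂ) := by
    rw [hA, Complex.ofReal_sum]
    refine Finset.sum_congr rfl fun j _ => ?_
    by_cases h : z j = 0
    · have hyj : ‖y j‖ = 0 := by rw [← hFy' j, h, norm_zero]
      rw [hw]
      simp only [h, map_zero, zero_mul, norm_zero]
      rw [hyj, Real.zero_rpow (ne_of_gt (by linarith : (0:ℝ) < q))]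
      norm_num
    · have hn : (0:ℝ) < ‖z j‖ := norm_pos_iff.mpr h
      have : w j * z j = ((‖z j‖ ^ (q-2:ℝ) : ℝ) : ℂ) * (z j * (starRingEnd ℂ) (z j)) := by
        rw [hw]; ring
      rw [this, Complex.mul_conj]
      rw [Complex.normSq_eq_norm_sq]
      have : (‖z j‖ ^ (q-2:ℝ)) * (‖z j‖ ^ (2:ℕ)) = ‖y j‖ ^ (q:ℝ) := by
        rw [← Real.rpow_natCast (‖z j‖) 2, ← Real.rpow_add hn]
        rw [hFy j]
        norm_num
      push_cast [← this]
      ring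
  -- the norms of w
  have normw : ∀ j, ‖w j‖ = ‖y j‖ ^ (q-1 : ℝ) := by
    intro j
    by_cases h : z j = 0
    · have hyj : ‖y j‖ = 0 := by rw [← hFy' j, h, norm_zero]
      rw [hw]
      simp only [h, map_zero, zero_mul, norm_zero]
      rw [hyj, Real.zero_rpow (ne_of_gt (by linarith : (0:ℝ) < q - 1))]
    · have hn : (0:ℝ) < ‖z j‖ := norm_pos_iff.mpr h
      rw [hw, norm_mul, RCLike.norm_conj, Complex.norm_real,
        Real.norm_eq_abs, abs_of_nonneg (Real.rpow_nonneg (norm_nonneg _) _)]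
      have h1 : (1:ℝ) + (q-2) = q-1 := by ring
      rw [← hFy' j, ← Real.rpow_one_add' hn.le (by linarith : (1:ℝ) + (q-2) ≠ 0), h1]
  -- ∑ ‖w j‖ ^ p = A
  have sumw : ∑ j, ‖w j‖ ^ (p : ℝ) = A := by
    rw [hA]
    refine Finset.sum_congr rfl fun j _ => ?_
    rw [normw j, ← Real.rpow_mul (norm_nonneg _)]
    congr 1
    rw [hqdef, hpdef]
    field_simp
    ring
  have hBIL := fourier_bilinear_bound B hB σ hσ0 hσ1 y w
  rw [← hpdef] at hBIL
  rw [pair, sumw, ← hP] at hBIL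
  rw [Complex.norm_real, Real.norm_eq_abs, abs_of_nonneg hA0.le] at hBIL
  -- take logs
  have hRHS : (0:ℝ) < (B:ℝ) ^ (-σ/2 : ℝ) * (P * A) ^ ((1+σ)/2 : ℝ) := by positivity
  have hlog := Real.log_le_log hA0 hBIL
  rw [Real.log_mul (by positivity) (by positivity), Real.log_rpow hBpos,
    Real.log_rpow (by positivity), Real.log_mul hP0.ne' hA0.ne'] at hlog
  nlinarith [hlog]

lemma sq_div_rpow (x N t : ℝ) (hx : 0 ≤ x) (hN : 0 < N) :
    ((x^2 : ℝ)/N) ^ (t : ℝ) = x ^ (2*t : ℝ) / N ^ (t : ℝ) := by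
  rw [Real.div_rpow (by positivity) hN.le]
  congr 1
  rw [← Real.rpow_natCast x 2, ← Real.rpow_mul hx]
  norm_num


-- Step A: eigenvector structure extraction
lemma eig_structure (B : ℕ) (hB : 1 ≤ B)
    (L : Fin B → ℝ) (k : ℝ)
    (Δ : Matrix (Fin B) (Fin B) ℂ)
    (hΔ : Δ = Matrix.diagonal fun j => Complex.exp (Complex.I * k * L j))
    (U : Matrix (Fin B ⊕ Fin B) (Fin B ⊕ Fin B) ℂ)
    (hU : U = Matrix.fromBlocks 0 (Δ * fourierMat B) Δ 0)
    (a : Fin B ⊕ Fin B → ℂ) (ha : a ≠ 0)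
    (heig : ∃ μ : ℂ, U.mulVec a = μ • a) :
    (∀ j, ‖a (Sum.inl j)‖ = ‖a (Sum.inr j)‖) ∧ (fun j => a (Sum.inr j)) ≠ 0 ∧
      (∀ j, ‖(fourierMat B).mulVec (fun j => a (Sum.inr j)) j‖ = ‖a (Sum.inr j)‖) := by
  obtain ⟨μ, hμeq⟩ := heig
  set x : Fin B → ℂ := fun j => a (Sum.inl j) with hx
  set y : Fin B → ℂ := fun j => a (Sum.inr j) with hy
  have hcomp_l : a ∘ Sum.inl = x := rfl
  have hcomp_r : a ∘ Sum.inr = y := rfl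
  rw [hU, hΔ] at hμeq
  rw [Matrix.fromBlocks_mulVec] at hμeq
  have eq1 : ∀ j, Complex.exp (Complex.I * k * L j) * (fourierMat B).mulVec y j
      = μ * x j := by
    intro j
    have := congrFun hμeq (Sum.inl j)
    simp only [Sum.elim_inl, Pi.add_apply, Matrix.zero_mulVec, Pi.zero_apply, zero_add,
      Pi.smul_apply, smul_eq_mul, hcomp_l, hcomp_r] at this
    rw [← Matrix.mulVec_mulVec, Matrix.mulVec_diagonal] at this
    exact this
  have eq2 : ∀ j, Complex.exp (Complex.I * k * L j) * x j = μ * y j := by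
    intro j
    have := congrFun hμeq (Sum.inr j)
    simp only [Sum.elim_inr, Pi.add_apply, Matrix.zero_mulVec, Pi.zero_apply, add_zero,
      Pi.smul_apply, smul_eq_mul, hcomp_l, hcomp_r, Matrix.mulVec_diagonal] at this
    exact this
  have hexp : ∀ j : Fin B, ‖Complex.exp (Complex.I * k * L j)‖ = 1 := by
    intro j
    have : Complex.I * k * L j = ((k * L j : ℝ) : ℂ) * Complex.I := by push_cast; ring
    rw [this, Complex.norm_exp_ofReal_mul_I]
  have hyne : y ≠ 0 := by
    intro h0
    apply ha
    funext b
    have hxz : ∀ j, x j = 0 := by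
      intro j
      have h2 := eq2 j
      rw [show y j = 0 from congrFun h0 j, mul_zero] at h2
      exact (mul_eq_zero.mp h2).resolve_left (Complex.exp_ne_zero _)
    cases b with
    | inl j => exact hxz j
    | inr j => exact congrFun h0 j
  have n1 : ∀ j, ‖(fourierMat B).mulVec y j‖ = ‖μ‖ * ‖x j‖ := by
    intro j
    have := congrArg norm (eq1 j)
    rwa [norm_mul, norm_mul, hexp j, one_mul] at this
  have n2 : ∀ j, ‖x j‖ = ‖μ‖ * ‖y j‖ := by
    intro j
    have := congrArg norm (eq2 j)
    rwa [norm_mul, norm_mul, hexp j, one_mul] at this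
  have hS2 : 0 < ∑ j, ‖y j‖ ^ 2 := by
    have : ∃ j, y j ≠ 0 := by
      by_contra h
      push_neg at h
      exact hyne (funext h)
    obtain ⟨j0, hj0⟩ := this
    refine Finset.sum_pos' (fun j _ => by positivity) ⟨j0, Finset.mem_univ _, by have := norm_pos_iff.mpr hj0; positivity⟩
  have hpars := fourier_parseval B hB y
  have hsum : ∑ j, ‖(fourierMat B).mulVec y j‖ ^ 2 = ‖μ‖^4 * ∑ j, ‖y j‖ ^ 2 := by
    rw [Finset.mul_sum]
    refine Finset.sum_congr rfl fun j _ => ?_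
    rw [n1 j, n2 j]
    ring
  have hμ4 : ‖μ‖^4 = 1 := by
    rw [hsum] at hpars
    have h1 : (‖μ‖^4) * (∑ j, ‖y j‖^2) = 1 * (∑ j, ‖y j‖^2) := by linarith
    exact mul_right_cancel₀ hS2.ne' h1
  have hμ1 : ‖μ‖ = 1 := by
    have h0 : (0:ℝ) ≤ ‖μ‖ := norm_nonneg μ
    nlinarith [hμ4, sq_nonneg (‖μ‖ - 1), sq_nonneg (‖μ‖ + 1), sq_nonneg (‖μ‖^2 - 1), sq_nonneg (‖μ‖^2 + 1)]
  refine ⟨fun j => by rw [n2 j, hμ1, one_mul], hyne, fun j => by rw [n1 j, n2 j, hμ1]; ring⟩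

lemma renyi_eval {B : ℕ} (a : Fin B ⊕ Fin B → ℂ) (y : Fin B → ℂ)
    (hyr : ∀ j, a (Sum.inr j) = y j)
    (hxy : ∀ j, ‖a (Sum.inl j)‖ = ‖y j‖)
    (S2 : ℝ) (hS2 : S2 = ∑ j, ‖y j‖ ^ 2) (hS2pos : 0 < S2)
    (ρ t : ℝ) (ht : 1 + ρ = t)
    (A : ℝ) (hA : A = ∑ j, ‖y j‖ ^ (2*t : ℝ)) (hA0 : 0 < A) :
    renyiEnt ρ a = -(1/ρ) * (Real.log 2 + Real.log A - t * Real.log (2 * S2)) := by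
  rw [renyiEnt]
  have hN : (∑ i, ‖a i‖ ^ 2 : ℝ) = 2 * S2 := by
    rw [Fintype.sum_sum_type, hS2, two_mul]
    congr 1
    · exact Finset.sum_congr rfl fun j _ => by rw [hxy j]
    · exact Finset.sum_congr rfl fun j _ => by rw [hyr j]
  have hN0 : (0:ℝ) < 2 * S2 := by linarith
  have hsum : (∑ b, (‖a b‖^2/(∑ i, ‖a i‖^2)) ^ (1+ρ)) = 2 * A / (2*S2) ^ (t:ℝ) := by
    simp only [hN, ht]
    rw [Fintype.sum_sum_type]
    have h1 : ∀ j : Fin B, ((‖a (Sum.inl j)‖^2/(2*S2)) ^ (t:ℝ))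
        = ‖y j‖ ^ (2*t:ℝ) / (2*S2) ^ (t:ℝ) := fun j => by
      rw [hxy j, sq_div_rpow _ _ _ (norm_nonneg _) hN0]
    have h2 : ∀ j : Fin B, ((‖a (Sum.inr j)‖^2/(2*S2)) ^ (t:ℝ))
        = ‖y j‖ ^ (2*t:ℝ) / (2*S2) ^ (t:ℝ) := fun j => by
      rw [show ‖a (Sum.inr j)‖ = ‖y j‖ from by rw [hyr j],
        sq_div_rpow _ _ _ (norm_nonneg _) hN0]
    rw [Finset.sum_congr rfl (fun j _ => h1 j), Finset.sum_congr rfl (fun j _ => h2 j),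
      ← Finset.sum_div, ← hA]
    ring
  rw [hsum, Real.log_div (by positivity) (by positivity),
    Real.log_mul (by norm_num) hA0.ne', Real.log_rpow hN0]

lemma renyi_glue (B : ℕ) (hB : 1 ≤ B) (a : Fin B ⊕ Fin B → ℂ) (y : Fin B → ℂ)
    (hyr : ∀ j, a (Sum.inr j) = y j)
    (hxy : ∀ j, ‖a (Sum.inl j)‖ = ‖y j‖)
    (hyne : y ≠ 0)
    (σ : ℝ) (hσ0 : 0 < σ) (hσ1 : σ < 1)
    (hcore : σ * Real.log B ≤ (1+σ) * Real.log (∑ k, ‖y k‖ ^ (2/(1+σ) : ℝ))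
      - (1-σ) * Real.log (∑ k, ‖y k‖ ^ (2/(1-σ) : ℝ)))
    (hpos : ∀ c : ℝ, 0 < ∑ k, ‖y k‖ ^ (c : ℝ))
    (hS2pos : 0 < ∑ j, ‖y j‖ ^ 2) :
      renyiEnt (σ / (1 - σ)) a + renyiEnt (-σ / (1 + σ)) a ≥
        Real.log B + 2 * Real.log 2 := by
  have hσ1' : (0:ℝ) < 1 + σ := by linarith
  have hσ1'' : (0:ℝ) < 1 - σ := by linarith
  have r1 := renyi_eval a y hyr hxy _ rfl hS2pos (σ/(1-σ)) (1/(1-σ))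
    (by field_simp; ring) (∑ k, ‖y k‖ ^ (2/(1-σ) : ℝ))
    (Finset.sum_congr rfl fun j _ => by congr 1; ring) (hpos _)
  have r2 := renyi_eval a y hyr hxy _ rfl hS2pos (-σ/(1+σ)) (1/(1+σ))
    (by field_simp; ring) (∑ k, ‖y k‖ ^ (2/(1+σ) : ℝ))
    (Finset.sum_congr rfl fun j _ => by congr 1; ring) (hpos _)
  rw [r1, r2]
  set LA := Real.log (∑ k, ‖y k‖ ^ (2/(1-σ) : ℝ)) with hLA
  set LP := Real.log (∑ k, ‖y k‖ ^ (2/(1+σ) : ℝ)) with hLP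
  set LN := Real.log (2 * ∑ j, ‖y j‖ ^ 2) with hLN
  set L2 := Real.log 2 with hL2
  have key : -(1/(σ/(1-σ))) * (L2 + LA - (1/(1-σ)) * LN)
      + -(1/(-σ/(1+σ))) * (L2 + LP - (1/(1+σ)) * LN)
      = 2*L2 + ((1+σ)*LP - (1-σ)*LA)/σ := by
    field_simp
    ring
  rw [key]
  have h2 : Real.log B ≤ ((1+σ)*LP - (1-σ)*LA)/σ := by
    rw [le_div_iff₀ hσ0]
    linarith [hcore]
  linarith

lemma shannon_glue (B : ℕ) (hB : 1 ≤ B) (a : Fin B ⊕ Fin B → ℂ) (y : Fin B → ℂ)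
    (hyr : ∀ j, a (Sum.inr j) = y j)
    (hxy : ∀ j, ‖a (Sum.inl j)‖ = ‖y j‖)
    (hyne : y ≠ 0)
    (hcore : ∀ σ : ℝ, 0 < σ → σ < 1 →
      σ * Real.log B ≤ (1+σ) * Real.log (∑ k, ‖y k‖ ^ (2/(1+σ) : ℝ))
        - (1-σ) * Real.log (∑ k, ‖y k‖ ^ (2/(1-σ) : ℝ)))
    (hS2pos : 0 < ∑ j, ‖y j‖ ^ 2) :
    shannonEnt a ≥ (1 / 2) * Real.log B + Real.log 2 := by
  classical
  set S : ℝ := ∑ j, ‖y j‖ ^ 2 with hSdef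
  set supp : Finset (Fin B) := Finset.univ.filter (fun j => y j ≠ 0) with hsupp
  have hmem : ∀ j ∈ supp, (0:ℝ) < ‖y j‖ := by
    intro j hj
    rw [hsupp, Finset.mem_filter] at hj
    exact norm_pos_iff.mpr hj.2
  set Pf : ℝ → ℝ := fun c => ∑ j ∈ supp, Real.exp (c * Real.log ‖y j‖) with hPfdef
  have hPf : ∀ c : ℝ, c ≠ 0 → Pf c = ∑ k, ‖y k‖ ^ (c:ℝ) := by
    intro c hc
    simp only [hPfdef]
    rw [show (∑ j ∈ supp, Real.exp (c * Real.log ‖y j‖))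
        = ∑ j ∈ supp, ‖y j‖ ^ (c:ℝ) from Finset.sum_congr rfl fun j hj => by
      rw [Real.rpow_def_of_pos (hmem j hj), mul_comm]]
    exact Finset.sum_subset (Finset.subset_univ _) fun j _ hj => by
      have : y j = 0 := by
        by_contra h
        exact hj (by rw [hsupp]; exact Finset.mem_filter.mpr ⟨Finset.mem_univ _, h⟩)
      rw [this, norm_zero, Real.zero_rpow hc]
  have hsupp2 : ∑ j ∈ supp, ‖y j‖ ^ 2 = S := by
    rw [hSdef]
    exact Finset.sum_subset (Finset.subset_univ _) fun j _ hj => by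
      have : y j = 0 := by
        by_contra h
        exact hj (by rw [hsupp]; exact Finset.mem_filter.mpr ⟨Finset.mem_univ _, h⟩)
      rw [this, norm_zero]
      norm_num
  have hP2 : Pf 2 = S := by
    rw [hPf 2 two_ne_zero, hSdef]
    exact Finset.sum_congr rfl fun j _ => by
      rw [show (2:ℝ) = ((2:ℕ):ℝ) by norm_num, Real.rpow_natCast]
  have hSpos : 0 < S := hS2pos
  -- derivative of Pf at 2
  set DP : ℝ := ∑ j ∈ supp, Real.exp (2 * Real.log ‖y j‖) * Real.log ‖y j‖ with hDPdef
  have hPd : HasDerivAt Pf DP 2 := by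
    rw [hPfdef, hDPdef]
    apply HasDerivAt.fun_sum
    intro j hj
    exact (hasDerivAt_mul_const (Real.log ‖y j‖)).exp
  -- derivative of the two exponent maps at 0
  have hden1 : HasDerivAt (fun σ : ℝ => 1 + σ) 1 0 := by
    simpa using (hasDerivAt_id (0:ℝ)).const_add 1
  have hden2 : HasDerivAt (fun σ : ℝ => 1 - σ) (-1) 0 := by
    simpa using (hasDerivAt_id (0:ℝ)).const_sub 1
  have g1 : HasDerivAt (fun σ : ℝ => 2/(1+σ)) (-2) 0 := by
    have := (hasDerivAt_const (0:ℝ) (2:ℝ)).div hden1 (by norm_num)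
    exact this.congr_deriv (by norm_num)
  have g2 : HasDerivAt (fun σ : ℝ => 2/(1-σ)) 2 0 := by
    have := (hasDerivAt_const (0:ℝ) (2:ℝ)).div hden2 (by norm_num)
    exact this.congr_deriv (by norm_num)
  have hg10 : (2:ℝ)/(1+(0:ℝ)) = 2 := by norm_num
  have hg20 : (2:ℝ)/(1-(0:ℝ)) = 2 := by norm_num
  have c1 : HasDerivAt (fun σ : ℝ => Pf (2/(1+σ))) (DP * (-2)) 0 := by
    have h := HasDerivAt.comp (h₂ := Pf) 0 (by rw [hg10]; exact hPd) g1
    exact h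
  have c2 : HasDerivAt (fun σ : ℝ => Pf (2/(1-σ))) (DP * 2) 0 := by
    have h := HasDerivAt.comp (h₂ := Pf) 0 (by rw [hg20]; exact hPd) g2
    exact h
  have l1 : HasDerivAt (fun σ : ℝ => Real.log (Pf (2/(1+σ)))) ((DP * (-2))/S) 0 := by
    have h := c1.log (show Pf (2/(1+(0:ℝ))) ≠ 0 by rw [hg10, hP2]; exact hSpos.ne')
    rw [show Pf (2/(1+(0:ℝ))) = S by rw [hg10, hP2]] at h
    exact h
  have l2 : HasDerivAt (fun σ : ℝ => Real.log (Pf (2/(1-σ)))) ((DP * 2)/S) 0 := by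
    have h := c2.log (show Pf (2/(1-(0:ℝ))) ≠ 0 by rw [hg20, hP2]; exact hSpos.ne')
    rw [show Pf (2/(1-(0:ℝ))) = S by rw [hg20, hP2]] at h
    exact h
  set φ : ℝ → ℝ := fun σ => (1+σ) * Real.log (Pf (2/(1+σ)))
    - (1-σ) * Real.log (Pf (2/(1-σ))) with hφdef
  set Dφ : ℝ := 2 * Real.log S - 4 * DP / S with hDφdef
  have hφD : HasDerivAt φ Dφ 0 := by
    rw [hφdef]
    have h := (hden1.mul l1).sub (hden2.mul l2)
    refine h.congr_deriv ?_
    rw [hDφdef]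
    rw [show Real.log (Pf (2/(1+(0:ℝ)))) = Real.log S by rw [hg10, hP2]]
    rw [show Real.log (Pf (2/(1-(0:ℝ)))) = Real.log S by rw [hg20, hP2]]
    ring
  have hφ0 : φ 0 = 0 := by
    simp only [hφdef, hg10, hg20]
    norm_num
  -- limit of slopes
  have hslope := hasDerivAt_iff_tendsto_slope.mp hφD
  have hmono : (nhdsWithin (0:ℝ) (Set.Ioi 0)) ≤ (nhdsWithin (0:ℝ) {(0:ℝ)}ᶜ) :=
    nhdsWithin_mono 0 (fun x hx => ne_of_gt hx)
  have hev : ∀ᶠ σ in nhdsWithin (0:ℝ) (Set.Ioi 0), Real.log B ≤ slope φ 0 σ := by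
    filter_upwards [Ioo_mem_nhdsGT_of_mem (Set.left_mem_Ico.mpr zero_lt_one)] with σ hσ
    obtain ⟨hσ0', hσ1'⟩ := hσ
    have hc := hcore σ hσ0' hσ1'
    rw [slope_def_field, hφ0, sub_zero, sub_zero, le_div_iff₀ hσ0']
    have e1 : Pf (2/(1+σ)) = ∑ k, ‖y k‖ ^ (2/(1+σ) : ℝ) :=
      hPf _ (by positivity)
    have e2 : Pf (2/(1-σ)) = ∑ k, ‖y k‖ ^ (2/(1-σ) : ℝ) :=
      hPf _ (ne_of_gt (show (0:ℝ) < 2/(1-σ) by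
        have h1 : (0:ℝ) < 1 - σ := by linarith
        positivity))
    simp only [hφdef, e1, e2]
    linarith [hc]
  have hD : Real.log B ≤ Dφ := ge_of_tendsto (hslope.mono_left hmono) hev
  -- evaluate shannonEnt a
  set E : ℝ := ∑ j ∈ supp, ‖y j‖ ^ 2 * Real.log ‖y j‖ with hEdef
  have hDPE : DP = E := by
    rw [hDPdef, hEdef]
    refine Finset.sum_congr rfl fun j hj => ?_
    rw [show (2:ℝ) * Real.log ‖y j‖ = Real.log (‖y j‖ ^ 2) by
      rw [Real.log_pow]; push_cast; ring]
    rw [Real.exp_log (by have := hmem j hj; positivity)]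
  have hN : (∑ i, ‖a i‖ ^ 2 : ℝ) = 2 * S := by
    rw [Fintype.sum_sum_type, hSdef, two_mul]
    congr 1
    · exact Finset.sum_congr rfl fun j _ => by rw [hxy j]
    · exact Finset.sum_congr rfl fun j _ => by rw [hyr j]
  have h2S : (0:ℝ) < 2 * S := by linarith
  have hsh : shannonEnt a = Real.log 2 + Real.log S - 2 * E / S := by
    rw [shannonEnt]
    simp only [hN, Fintype.sum_sum_type]
    have hterm1 : ∀ j : Fin B, (‖a (Sum.inl j)‖^2/(2*S)) * Real.log (‖a (Sum.inl j)‖^2/(2*S))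
        = (‖y j‖^2/(2*S)) * Real.log (‖y j‖^2/(2*S)) := fun j => by rw [hxy j]
    have hterm2 : ∀ j : Fin B, (‖a (Sum.inr j)‖^2/(2*S)) * Real.log (‖a (Sum.inr j)‖^2/(2*S))
        = (‖y j‖^2/(2*S)) * Real.log (‖y j‖^2/(2*S)) := fun j => by rw [hyr j]
    rw [Finset.sum_congr rfl (fun j _ => hterm1 j), Finset.sum_congr rfl (fun j _ => hterm2 j)]
    have huniv : ∑ j, (‖y j‖^2/(2*S)) * Real.log (‖y j‖^2/(2*S))
        = ∑ j ∈ supp, (‖y j‖^2/(2*S)) * Real.log (‖y j‖^2/(2*S)) := by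
      symm
      exact Finset.sum_subset (Finset.subset_univ _) fun j _ hj => by
        have : y j = 0 := by
          by_contra h
          exact hj (by rw [hsupp]; exact Finset.mem_filter.mpr ⟨Finset.mem_univ _, h⟩)
        rw [this, norm_zero]
        norm_num
    rw [huniv]
    have hsum_supp : ∑ j ∈ supp, (‖y j‖^2/(2*S)) * Real.log (‖y j‖^2/(2*S))
        = (2*E - Real.log (2*S) * S)/(2*S) := by
      have hterm : ∀ j ∈ supp, (‖y j‖^2/(2*S)) * Real.log (‖y j‖^2/(2*S))
          = (2*(‖y j‖^2 * Real.log ‖y j‖) - Real.log (2*S) * ‖y j‖^2)/(2*S) := by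
        intro j hj
        have hr := hmem j hj
        rw [Real.log_div (by positivity) h2S.ne', Real.log_pow]
        push_cast
        ring
      rw [Finset.sum_congr rfl hterm, ← Finset.sum_div, Finset.sum_sub_distrib,
        ← Finset.mul_sum, ← Finset.mul_sum, hsupp2, ← hEdef]
    rw [hsum_supp]
    rw [Real.log_mul two_ne_zero hSpos.ne']
    field_simp
    ring
  rw [hsh]
  rw [hDφdef] at hD
  have hES : 4 * DP / S = 4 * E / S := by rw [hDPE]
  rw [hES] at hD
  have : Real.log S - 2 * E / S ≥ (1/2) * Real.log B := by
    have h4 : 4 * E / S = 4 * (E / S) := by ring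
    have h2' : 2 * E / S = 2 * (E / S) := by ring
    rw [h4] at hD
    rw [h2']
    linarith
  linarith

theorem entropy_bound_fourier_star (B : ℕ) (hB : 1 ≤ B)
    (L : Fin B → ℝ) (k : ℝ)
    (Δ : Matrix (Fin B) (Fin B) ℂ)
    (hΔ : Δ = Matrix.diagonal fun j => Complex.exp (Complex.I * k * L j))
    (U : Matrix (Fin B ⊕ Fin B) (Fin B ⊕ Fin B) ℂ)
    (hU : U = Matrix.fromBlocks 0 (Δ * fourierMat B) Δ 0)
    (a : Fin B ⊕ Fin B → ℂ) (ha : a ≠ 0)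
    (heig : ∃ μ : ℂ, U.mulVec a = μ • a) :
    shannonEnt a ≥ (1 / 2) * Real.log B + Real.log 2 ∧
    ∀ σ : ℝ, 0 < σ → σ < 1 →
      renyiEnt (σ / (1 - σ)) a + renyiEnt (-σ / (1 + σ)) a ≥
        Real.log B + 2 * Real.log 2 := by
  classical
  obtain ⟨hxy, hyne, hFy⟩ := eig_structure B hB L k Δ hΔ U hU a ha heig
  set y : Fin B → ℂ := fun j => a (Sum.inr j) with hydef
  have hyr : ∀ j, a (Sum.inr j) = y j := fun j => rfl
  have hS2pos : 0 < ∑ j, ‖y j‖ ^ 2 := by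
    have : ∃ j, y j ≠ 0 := by
      by_contra h
      push_neg at h
      exact hyne (funext h)
    obtain ⟨j0, hj0⟩ := this
    refine Finset.sum_pos' (fun j _ => by positivity)
      ⟨j0, Finset.mem_univ _, by have := norm_pos_iff.mpr hj0; positivity⟩
  have hcore : ∀ σ : ℝ, 0 < σ → σ < 1 →
      σ * Real.log B ≤ (1+σ) * Real.log (∑ k, ‖y k‖ ^ (2/(1+σ) : ℝ))
        - (1-σ) * Real.log (∑ k, ‖y k‖ ^ (2/(1-σ) : ℝ)) :=
    fun σ h1 h2 => core_ineq B hB y hyne hFy σ h1 h2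
  constructor
  · exact shannon_glue B hB a y hyr hxy hyne hcore hS2pos
  · intro σ hσ0 hσ1
    exact renyi_glue B hB a y hyr hxy hyne σ hσ0 hσ1 (hcore σ hσ0 hσ1)
      (sum_norm_rpow_pos y hyne) hS2pos

end
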